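/- Let 𝔖 be a collection of subsets of a set S with |S| = 7 such that for any r, s ∈ 𝔖 the symmetric difference |r △ s| lies in {0, 4, 6}. Then |𝔖| ≤ 8. -/
import Mathlib

open Finset

private lemma card_symmDiff_aux {α : Type*} [DecidableEq α] (r s : Finset α) :
    (symmDiff r s).card + 2 * (r ∩ s).card = r.card + s.card := by
  have h1 : symmDiff r s = (r ∪ s) \ (r ∩ s) := by
    rw [symmDiff_eq_sup_sdiff_inf, Finset.sup_eq_union, Finset.inf_eq_inter]
  have h2 : r ∩ s ⊆ r ∪ s := (inter_subset_left).trans subset_union_left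
  have h3 := Finset.card_union_add_card_inter r s
  have h5 : (r ∩ s).card ≤ (r ∪ s).card := card_le_card h2
  rw [h1, Finset.card_sdiff_of_subset h2]
  omega

/-- Packing bound: a family of 3-subsets of `T` pairwise meeting in at most one
point has at most `T.card.choose 2 / 3` members. -/
private lemma steiner_bound {α : Type*} [DecidableEq α] (T : Finset α) (C : Finset (Finset α))
    (hsub : ∀ c ∈ C, c ⊆ T) (h3 : ∀ c ∈ C, c.card = 3)
    (hint : ∀ c ∈ C, ∀ d ∈ C, c ≠ d → (c ∩ d).card ≤ 1) :
    3 * C.card ≤ T.card.choose 2 := by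
  classical
  have hdisj : ∀ c ∈ C, ∀ d ∈ C, c ≠ d →
      Disjoint (Finset.powersetCard 2 c) (Finset.powersetCard 2 d) := by
    intro c hc d hd hcd
    rw [Finset.disjoint_left]
    intro p hp hp'
    rw [Finset.mem_powersetCard] at hp hp'
    have hsub2 : p ⊆ c ∩ d := subset_inter hp.1 hp'.1
    have := card_le_card hsub2
    have := hint c hc d hd hcd
    omega
  have hb : (C.biUnion fun c => Finset.powersetCard 2 c).card
      = ∑ c ∈ C, (Finset.powersetCard 2 c).card := Finset.card_biUnion hdisj
  have hsum : ∑ c ∈ C, (Finset.powersetCard 2 c).card = 3 * C.card := by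
    rw [Finset.sum_congr rfl (fun c hc => by
      rw [Finset.card_powersetCard, h3 c hc])]
    simp [mul_comm]
  have hss : (C.biUnion fun c => Finset.powersetCard 2 c) ⊆ Finset.powersetCard 2 T := by
    intro p hp
    rw [Finset.mem_biUnion] at hp
    obtain ⟨c, hc, hp⟩ := hp
    rw [Finset.mem_powersetCard] at hp ⊢
    exact ⟨hp.1.trans (hsub c hc), hp.2⟩
  have := card_le_card hss
  rw [hb, hsum, Finset.card_powersetCard] at this
  exact this

/-- The case n = 7 of Lemma `lem.max.set.D`. -/
theorem subset_system_card_seven {α : Type*} [DecidableEq α] (S : Finset α)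
    (hS : S.card = 7) (𝔖 : Finset (Finset α))
    (hsub : ∀ s ∈ 𝔖, s ⊆ S)
    (hdiff : ∀ r ∈ 𝔖, ∀ s ∈ 𝔖, (symmDiff r s).card ∈ ({0, 4, 6} : Set ℕ)) :
    𝔖.card ≤ 8 := by
  classical
  rcases 𝔖.eq_empty_or_nonempty with h | ⟨t, ht⟩
  · simp [h]
  -- translate by t
  set T : Finset (Finset α) := 𝔖.image (fun s => symmDiff s t) with hT
  have hfinj : Function.Injective (fun s : Finset α => symmDiff s t) :=
    Function.Involutive.injective (fun s => by simp [symmDiff_assoc])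
  have hcardT : T.card = 𝔖.card := Finset.card_image_of_injective _ hfinj
  have hmemT : ∀ u ∈ T, ∃ s ∈ 𝔖, u = symmDiff s t := by
    intro u hu
    rw [hT, Finset.mem_image] at hu
    obtain ⟨s, hs, hsu⟩ := hu
    exact ⟨s, hs, hsu.symm⟩
  have hsubT : ∀ u ∈ T, u ⊆ S := by
    intro u hu
    obtain ⟨s, hs, rfl⟩ := hmemT u hu
    exact (symmDiff_le_sup (a := s) (b := t)).trans
      (Finset.union_subset (hsub s hs) (hsub t ht))
  have hdiffT : ∀ u ∈ T, ∀ v ∈ T, (symmDiff u v).card ∈ ({0, 4, 6} : Set ℕ) := by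
    intro u hu v hv
    obtain ⟨s, hs, rfl⟩ := hmemT u hu
    obtain ⟨r, hr, rfl⟩ := hmemT v hv
    have : symmDiff (symmDiff s t) (symmDiff r t) = symmDiff s r := by
      rw [symmDiff_symmDiff_symmDiff_comm, symmDiff_self, symmDiff_bot]
    rw [this]
    exact hdiff s hs r hr
  have h0T : (∅ : Finset α) ∈ T := by
    rw [hT, Finset.mem_image]
    exact ⟨t, ht, by simp [symmDiff_self]⟩
  have hcardmem : ∀ u ∈ T, u.card ∈ ({0, 4, 6} : Set ℕ) := by
    intro u hu
    have := hdiffT u hu ∅ h0T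
    have he : symmDiff u ∅ = u := by simp [symmDiff]
    rwa [he] at this
  -- split
  set A : Finset (Finset α) := T.filter (fun u => u.card = 4) with hA
  set B : Finset (Finset α) := T.filter (fun u => u.card = 6) with hB
  set Z : Finset (Finset α) := T.filter (fun u => u.card = 0) with hZ
  have hTsplit : T ⊆ Z ∪ A ∪ B := by
    intro u hu
    have := hcardmem u hu
    simp only [Set.mem_insert_iff, Set.mem_singleton_iff] at this
    simp only [Finset.mem_union, hZ, hA, hB, Finset.mem_filter]
    rcases this with h | h | h
    · exact Or.inl (Or.inl ⟨hu, h⟩)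
    · exact Or.inl (Or.inr ⟨hu, h⟩)
    · exact Or.inr ⟨hu, h⟩
  have hcardle : T.card ≤ Z.card + A.card + B.card :=
    (card_le_card hTsplit).trans ((Finset.card_union_le _ _).trans
      (by exact Nat.add_le_add_right (Finset.card_union_le _ _) _))
  have hZ1 : Z.card ≤ 1 := by
    apply Finset.card_le_one.mpr
    intro u hu v hv
    rw [hZ, Finset.mem_filter] at hu hv
    rw [Finset.card_eq_zero.mp hu.2, Finset.card_eq_zero.mp hv.2]
  -- distinct elements of T have nonzero symmDiff
  have hne : ∀ u ∈ T, ∀ v ∈ T, u ≠ v → (symmDiff u v).card ∈ ({4, 6} : Set ℕ) := by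
    intro u hu v hv huv
    have := hdiffT u hu v hv
    simp only [Set.mem_insert_iff, Set.mem_singleton_iff] at this ⊢
    rcases this with h | h
    · exfalso
      apply huv
      have : symmDiff u v = ∅ := Finset.card_eq_zero.mp h
      exact symmDiff_eq_bot.mp this
    · exact h
  have hB1 : B.card ≤ 1 := by
    apply Finset.card_le_one.mpr
    intro u hu v hv
    rw [hB, Finset.mem_filter] at hu hv
    by_contra huv
    have h1 := hne u hu.1 v hv.1 huv
    have h2 := card_symmDiff_aux u v
    have h3 : (u ∪ v).card ≤ 7 := by
      rw [← hS]
      exact card_le_card (Finset.union_subset (hsubT u hu.1) (hsubT v hv.1))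
    have h4 := Finset.card_union_add_card_inter u v
    simp only [Set.mem_insert_iff, Set.mem_singleton_iff] at h1
    omega
  -- the complements of the 4-sets
  set C : Finset (Finset α) := A.image (fun a => S \ a) with hC
  have hAsub : ∀ a ∈ A, a ⊆ S := by
    intro a ha
    rw [hA, Finset.mem_filter] at ha
    exact hsubT a ha.1
  have hCinj : Set.InjOn (fun a => S \ a) A := by
    intro a ha b hb hab
    simp only at hab
    rw [← Finset.sdiff_sdiff_eq_self (hAsub a ha), ← Finset.sdiff_sdiff_eq_self (hAsub b hb), hab]
  have hCcard : C.card = A.card := Finset.card_image_of_injOn hCinj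
  have hC3 : ∀ c ∈ C, c.card = 3 := by
    intro c hc
    rw [hC, Finset.mem_image] at hc
    obtain ⟨a, ha, rfl⟩ := hc
    have ha' := ha
    rw [hA, Finset.mem_filter] at ha'
    rw [Finset.card_sdiff_of_subset (hAsub a ha), hS, ha'.2]
  have hCint : ∀ c ∈ C, ∀ d ∈ C, c ≠ d → (c ∩ d).card ≤ 1 := by
    intro c hc d hd hcd
    rw [hC, Finset.mem_image] at hc hd
    obtain ⟨a, ha, rfl⟩ := hc
    obtain ⟨b, hb, rfl⟩ := hd
    have hab : a ≠ b := fun h => hcd (by rw [h])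
    have ha' := ha; have hb' := hb
    rw [hA, Finset.mem_filter] at ha' hb'
    have h1 := hne a ha'.1 b hb'.1 hab
    have h2 := card_symmDiff_aux a b
    have h4 := Finset.card_union_add_card_inter a b
    have hinteq : (S \ a) ∩ (S \ b) = S \ (a ∪ b) := (Finset.sdiff_union_distrib S a b).symm
    have h5 : ((S \ a) ∩ (S \ b)).card = 7 - (a ∪ b).card := by
      rw [hinteq, Finset.card_sdiff_of_subset (Finset.union_subset (hAsub a ha) (hAsub b hb)), hS]
    simp only [Set.mem_insert_iff, Set.mem_singleton_iff] at h1
    omega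
  have hCsubS : ∀ c ∈ C, c ⊆ S := by
    intro c hc
    rw [hC, Finset.mem_image] at hc
    obtain ⟨a, _, rfl⟩ := hc
    exact Finset.sdiff_subset
  rcases B.eq_empty_or_nonempty with hBe | ⟨b, hb⟩
  · -- no 6-sets: A ≤ 7
    have := steiner_bound S C hCsubS hC3 hCint
    rw [hS] at this
    have hch : Nat.choose 7 2 = 21 := by decide
    have hA7 : A.card ≤ 7 := by
      rw [← hCcard]; omega
    rw [← hcardT]
    have : B.card = 0 := by rw [hBe]; rfl
    omega
  · -- one 6-set b: every 3-set complement lies in b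
    have hb' := hb
    rw [hB, Finset.mem_filter] at hb'
    have hCsubb : ∀ c ∈ C, c ⊆ b := by
      intro c hc
      rw [hC, Finset.mem_image] at hc
      obtain ⟨a, ha, rfl⟩ := hc
      have ha' := ha
      rw [hA, Finset.mem_filter] at ha'
      -- show a ∪ b = S
      have h1 := hne a ha'.1 b hb'.1 (by
        intro h; rw [h] at ha'; have := hb'.2; omega)
      have h2 := card_symmDiff_aux a b
      have h4 := Finset.card_union_add_card_inter a b
      have h3 : (a ∪ b).card ≤ 7 := by
        rw [← hS]
        exact card_le_card (Finset.union_subset (hAsub a ha) (hsubT b hb'.1))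
      simp only [Set.mem_insert_iff, Set.mem_singleton_iff] at h1
      have hcab : (a ∪ b).card = 7 := by omega
      have hunion : a ∪ b = S := Finset.eq_of_subset_of_card_le
        (Finset.union_subset (hAsub a ha) (hsubT b hb'.1)) (by omega)
      intro x hx
      rw [Finset.mem_sdiff] at hx
      have : x ∈ a ∪ b := hunion ▸ hx.1
      rw [Finset.mem_union] at this
      exact this.resolve_left hx.2
    have := steiner_bound b C hCsubb hC3 hCint
    rw [hb'.2] at this
    have hch : Nat.choose 6 2 = 15 := by decide
    have hA5 : A.card ≤ 5 := by rw [← hCcard]; omega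
    rw [← hcardT]
    omega
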